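/- Let h, H, x be positive integers with h ≤ H and H = o(x) as x → ∞, and let f, g' : ℕ → ℂ be essentially bounded with g'(q) = 0 for all q ≤ h. Then ∑_{1 ≤ a ≤ H} ∑_{h < q ≤ H} g'(q) ∑_{x < n ≤ x+h, n ≡ a mod q} f(n) = ( ∑_{1 ≤ a ≤ H} ∑_{h < q ≤ H, q | x−a} g'(q) ) · ∑_{x < n ≤ x+h} f(n) + O_ε(x^ε h²). -/

import Mathlib

open Finset Filter Asymptotics

/-- `f` is essentially bounded: for every `ε > 0`, `f n ≪_ε n^ε`. -/
def EssBdd (f : ℕ → ℂ) : Prop :=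
  ∀ ε : ℝ, 0 < ε → ∃ C : ℝ, ∀ n : ℕ, 1 ≤ n → ‖f n‖ ≤ C * (n : ℝ) ^ ε

section aux

lemma divisor_bound (ε : ℝ) (hε : 0 < ε) :
    ∃ C : ℝ, 1 ≤ C ∧ ∀ n : ℕ, n ≠ 0 → (n.divisors.card : ℝ) ≤ C * (n : ℝ) ^ ε := by
  set B : ℕ := ⌈(2:ℝ) ^ (1/ε)⌉₊ with hB
  set M : ℝ := max 1 (2 / (ε * Real.log 2)) with hM
  have hM1 : 1 ≤ M := le_max_left _ _
  have hlog2 : 0 < Real.log 2 := Real.log_pos (by norm_num)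
  refine ⟨M ^ B, one_le_pow₀ hM1, ?_⟩
  intro n hn
  have key : ∀ p ∈ n.primeFactors,
      ((n.factorization p + 1 : ℕ) : ℝ) ≤
        (if p ≤ B then M else 1) * ((p : ℝ) ^ (n.factorization p)) ^ ε := by
    intro p hp
    have hpp : p.Prime := Nat.prime_of_mem_primeFactors hp
    have hp2 : (2:ℝ) ≤ (p:ℝ) := by exact_mod_cast hpp.two_le
    set a : ℕ := n.factorization p with ha
    have hpa : ((p:ℝ) ^ a) ^ ε = (p:ℝ) ^ ((a:ℝ) * ε) := by
      rw [← Real.rpow_natCast (p:ℝ) a, ← Real.rpow_mul (by linarith)]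
    by_cases hpB : p ≤ B
    · simp only [hpB, if_true]
      have h2a : (2:ℝ) ^ ((a:ℝ) * ε) ≤ ((p:ℝ) ^ a) ^ ε := by
        rw [hpa]
        exact Real.rpow_le_rpow (by norm_num) hp2 (by positivity)
      have hexp : (a:ℝ) * ε * Real.log 2 + 1 ≤ (2:ℝ) ^ ((a:ℝ) * ε) := by
        rw [Real.rpow_def_of_pos (by norm_num : (0:ℝ) < 2)]
        calc (a:ℝ) * ε * Real.log 2 + 1 = Real.log 2 * ((a:ℝ) * ε) + 1 := by ring
        _ ≤ Real.exp (Real.log 2 * ((a:ℝ) * ε)) := by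
              have := Real.add_one_le_exp (Real.log 2 * ((a:ℝ) * ε)); linarith
      have hMt : 2 / (ε * Real.log 2) ≤ M := le_max_right _ _
      have ht0 : (0:ℝ) ≤ (a:ℝ) * ε * Real.log 2 := by positivity
      have : ((a:ℕ) + 1 : ℝ) ≤ M * ((a:ℝ) * ε * Real.log 2 + 1) := by
        have h1 : 2 * (a:ℝ) ≤ M * ((a:ℝ) * ε * Real.log 2) := by
          have : 2 * (a:ℝ) = (2 / (ε * Real.log 2)) * ((a:ℝ) * ε * Real.log 2) := by
            field_simp
          rw [this]
          exact mul_le_mul_of_nonneg_right hMt ht0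
        nlinarith [(Nat.cast_nonneg a : (0:ℝ) ≤ (a:ℝ))]
      calc ((a + 1 : ℕ) : ℝ) = (a:ℝ) + 1 := by push_cast; ring
        _ ≤ M * ((a:ℝ) * ε * Real.log 2 + 1) := by push_cast at this ⊢; linarith
        _ ≤ M * ((p:ℝ) ^ a) ^ ε := by
            apply mul_le_mul_of_nonneg_left _ (by linarith)
            exact hexp.trans h2a
    · simp only [hpB, if_false, one_mul]
      have hBp : (2:ℝ) ^ (1/ε) ≤ (p:ℝ) := by
        calc (2:ℝ) ^ (1/ε) ≤ (B:ℕ) := Nat.le_ceil _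
          _ ≤ (p:ℝ) := by exact_mod_cast Nat.le_of_not_le hpB
      have hp_eps : (2:ℝ) ≤ (p:ℝ) ^ ε := by
        have := Real.rpow_le_rpow (by positivity) hBp hε.le
        rwa [← Real.rpow_mul (by norm_num : (0:ℝ) ≤ 2), one_div_mul_cancel hε.ne',
          Real.rpow_one] at this
      have heq : ((p:ℝ) ^ a) ^ ε = ((p:ℝ) ^ ε) ^ a := by
        rw [hpa, ← Real.rpow_natCast ((p:ℝ) ^ ε) a, ← Real.rpow_mul (by linarith)]
        ring_nf
      rw [heq]
      calc ((a + 1 : ℕ) : ℝ) ≤ ((2 ^ a : ℕ) : ℝ) := by exact_mod_cast Nat.lt_two_pow_self (n := a)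
        _ = (2:ℝ) ^ a := by push_cast; ring
        _ ≤ ((p:ℝ) ^ ε) ^ a := pow_le_pow_left₀ (by norm_num) hp_eps a
  have hprod : ((n.divisors.card : ℕ) : ℝ)
      = ∏ p ∈ n.primeFactors, ((n.factorization p + 1 : ℕ) : ℝ) := by
    rw [Nat.card_divisors hn]; push_cast; ring
  have hn_eq : (n : ℝ) ^ ε = ∏ p ∈ n.primeFactors, ((p:ℝ) ^ (n.factorization p)) ^ ε := by
    rw [Real.finset_prod_rpow _ _ (fun p _ => by positivity)]
    congr 1
    conv_lhs => rw [← Nat.factorization_prod_pow_eq_self hn]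
    rw [Finsupp.prod, Nat.support_factorization]
    push_cast
    rfl
  rw [hprod, hn_eq]
  calc ∏ p ∈ n.primeFactors, ((n.factorization p + 1 : ℕ) : ℝ)
      ≤ ∏ p ∈ n.primeFactors, ((if p ≤ B then M else 1) * ((p:ℝ) ^ (n.factorization p)) ^ ε) :=
        Finset.prod_le_prod (fun p _ => by positivity) key
    _ = (∏ p ∈ n.primeFactors, (if p ≤ B then M else 1)) *
        ∏ p ∈ n.primeFactors, ((p:ℝ) ^ (n.factorization p)) ^ ε := Finset.prod_mul_distrib
    _ ≤ M ^ B * ∏ p ∈ n.primeFactors, ((p:ℝ) ^ (n.factorization p)) ^ ε := by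
        apply mul_le_mul_of_nonneg_right _ (Finset.prod_nonneg fun p _ => by positivity)
        rw [Finset.prod_ite, Finset.prod_const, Finset.prod_const, one_pow, mul_one]
        have hcard : (n.primeFactors.filter (fun p => p ≤ B)).card ≤ B := by
          have hsub : n.primeFactors.filter (fun p => p ≤ B) ⊆ Finset.Icc 1 B := by
            intro p hp
            simp only [Finset.mem_filter] at hp
            exact Finset.mem_Icc.mpr
              ⟨(Nat.prime_of_mem_primeFactors hp.1).one_lt.le.trans' (by norm_num), hp.2⟩
          calc _ ≤ (Finset.Icc 1 B).card := Finset.card_le_card hsub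
            _ = B := by rw [Nat.card_Icc]; omega
        exact pow_le_pow_right₀ hM1 hcard

lemma cnt_eq (H q m : ℕ) (hHm : H < m) :
    ((Finset.Icc 1 H).filter (fun a => a % q = m % q)).card
      = ((Finset.Ioc (m - 1 - H) (m - 1)).filter (fun b => q ∣ b)).card := by
  apply Finset.card_bij (fun a _ => m - a)
  · intro a ha
    simp only [Finset.mem_filter, Finset.mem_Icc] at ha
    simp only [Finset.mem_filter, Finset.mem_Ioc]
    refine ⟨⟨by omega, by omega⟩, ?_⟩
    exact (Nat.modEq_iff_dvd' (by omega)).mp ha.2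
  · intro a ha a' ha' hee
    simp only [Finset.mem_filter, Finset.mem_Icc] at ha ha'
    omega
  · intro b hb
    simp only [Finset.mem_filter, Finset.mem_Ioc] at hb
    refine ⟨m - b, ?_, by omega⟩
    simp only [Finset.mem_filter, Finset.mem_Icc]
    refine ⟨⟨by omega, by omega⟩, ?_⟩
    have : q ∣ m - (m - b) := by
      have : m - (m - b) = b := by omega
      rw [this]; exact hb.2
    exact (Nat.modEq_iff_dvd' (by omega)).mpr this

lemma T_add (q a b c : ℕ) (hab : a ≤ b) (hbc : b ≤ c) :
    ((Finset.Ioc a c).filter (fun m => q ∣ m)).card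
      = ((Finset.Ioc a b).filter (fun m => q ∣ m)).card
        + ((Finset.Ioc b c).filter (fun m => q ∣ m)).card := by
  rw [← Finset.Ioc_union_Ioc_eq_Ioc hab hbc, Finset.filter_union,
    Finset.card_union_of_disjoint]
  refine Finset.disjoint_filter_filter ?_
  rw [Finset.disjoint_left]
  intro m hm hm'
  simp only [Finset.mem_Ioc] at hm hm'
  omega

lemma key_eq (H q x n : ℕ) (hHx : H < x) (hxn : x ≤ n) :
    ((Finset.Icc 1 H).filter (fun a => a % q = n % q)).card
      + ((Finset.Ioc (x - 1 - H) (n - 1 - H)).filter (fun m => q ∣ m)).card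
    = ((Finset.Icc 1 H).filter (fun a => a % q = x % q)).card
      + ((Finset.Ioc (x - 1) (n - 1)).filter (fun m => q ∣ m)).card := by
  rw [cnt_eq H q n (by omega), cnt_eq H q x (by omega)]
  have h1 := T_add q (x-1-H) (n-1-H) (n-1) (by omega) (by omega)
  have h2 := T_add q (x-1-H) (x-1) (n-1) (by omega) (by omega)
  omega

lemma swap_count (Q M : Finset ℕ) :
    ∑ q ∈ Q, ((M.filter (fun m => q ∣ m)).card)
      = ∑ m ∈ M, ((Q.filter (fun q => q ∣ m)).card) := by
  simp only [Finset.card_filter]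
  exact Finset.sum_comm

end aux

/-- First part of the Corollary: no sieve-function hypothesis is needed,
only that `g'` vanishes on `[1, h]`. -/
theorem corollary_first_part
    (h H x : ℕ → ℕ) (hh : ∀ i, 0 < h i) (hx : ∀ i, 0 < x i)
    (hhH : ∀ i, h i ≤ H i)
    (hHx : (fun i => (H i : ℝ)) =o[atTop] (fun i => (x i : ℝ)))
    (f g' : ℕ → ℂ) (hf : EssBdd f) (hg' : EssBdd g')
    (hvanish : ∀ i, ∀ q ≤ h i, g' q = 0)
    (ε : ℝ) (hε : 0 < ε) :
    (fun i =>
        (∑ a ∈ Finset.Icc 1 (H i), ∑ q ∈ Finset.Ioc (h i) (H i),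
            g' q * ∑ n ∈ (Finset.Ioc (x i) (x i + h i)).filter (fun n => n % q = a % q), f n)
          - (∑ a ∈ Finset.Icc 1 (H i),
                ∑ q ∈ (Finset.Ioc (h i) (H i)).filter (fun q => q ∣ x i - a), g' q) *
              (∑ n ∈ Finset.Ioc (x i) (x i + h i), f n))
      =O[atTop] (fun i => (x i : ℝ) ^ ε * (h i : ℝ) ^ 2) := by
  have hδ : 0 < ε / 3 := by linarith
  obtain ⟨Cf, hCf⟩ := hf (ε/3) hδ
  obtain ⟨Cg, hCg⟩ := hg' (ε/3) hδ
  obtain ⟨Cd, hCd1, hCd⟩ := divisor_bound (ε/3) hδ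
  have hCf0 : 0 ≤ Cf := by
    have := hCf 1 le_rfl
    simpa [Real.one_rpow] using (norm_nonneg (f 1)).trans this
  have hCg0 : 0 ≤ Cg := by
    have := hCg 1 le_rfl
    simpa [Real.one_rpow] using (norm_nonneg (g' 1)).trans this
  rw [Asymptotics.isBigO_iff]
  refine ⟨Cg * Cf * (2 * Cd) * (2:ℝ) ^ ε, ?_⟩
  have hev : ∀ᶠ i in atTop, ‖(H i : ℝ)‖ ≤ (1/2) * ‖(x i : ℝ)‖ :=
    hHx.def (by norm_num)
  filter_upwards [hev] with i hi
  have hHxi : H i < x i := by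
    have h1 : (H i : ℝ) ≤ (1/2) * x i := by
      simpa [Real.norm_natCast] using hi
    have h2 : (1:ℝ) ≤ x i := by exact_mod_cast hx i
    by_contra hc
    push_neg at hc
    have : (x i : ℝ) ≤ H i := by exact_mod_cast hc
    linarith
  set L := h i with hLdef
  set X := x i with hXdef
  set HH := H i with hHHdef
  have hL : 0 < L := hh i
  have hX : 0 < X := hx i
  have hLH : L ≤ HH := hhH i
  set cnt : ℕ → ℕ → ℕ :=
    fun q m => ((Finset.Icc 1 HH).filter (fun a => a % q = m % q)).card with hcnt
  set A : ℕ → ℕ → ℕ :=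
    fun q n => ((Finset.Ioc (X-1) (n-1)).filter (fun m => q ∣ m)).card with hA
  set Bc : ℕ → ℕ → ℕ :=
    fun q n => ((Finset.Ioc (X-1-HH) (n-1-HH)).filter (fun m => q ∣ m)).card with hBc
  -- Step A : rewrite first term
  have e1 : (∑ a ∈ Finset.Icc 1 HH, ∑ q ∈ Finset.Ioc L HH,
        g' q * ∑ n ∈ (Finset.Ioc X (X + L)).filter (fun n => n % q = a % q), f n)
      = ∑ q ∈ Finset.Ioc L HH, g' q * ∑ n ∈ Finset.Ioc X (X + L), (cnt q n : ℂ) * f n := by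
    rw [Finset.sum_comm]
    refine Finset.sum_congr rfl fun q _ => ?_
    rw [← Finset.mul_sum]
    congr 1
    calc ∑ a ∈ Finset.Icc 1 HH, ∑ n ∈ (Finset.Ioc X (X + L)).filter (fun n => n % q = a % q), f n
        = ∑ a ∈ Finset.Icc 1 HH, ∑ n ∈ Finset.Ioc X (X + L), if n % q = a % q then f n else 0 :=
          Finset.sum_congr rfl fun a _ => Finset.sum_filter _ _
      _ = ∑ n ∈ Finset.Ioc X (X + L), ∑ a ∈ Finset.Icc 1 HH, if n % q = a % q then f n else 0 :=
          Finset.sum_comm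
      _ = ∑ n ∈ Finset.Ioc X (X + L), (cnt q n : ℂ) * f n := by
          refine Finset.sum_congr rfl fun n _ => ?_
          rw [← Finset.sum_filter, Finset.sum_const, nsmul_eq_mul]
          simp only [hcnt]
          have : (Finset.Icc 1 HH).filter (fun a => n % q = a % q)
              = (Finset.Icc 1 HH).filter (fun a => a % q = n % q) :=
            Finset.filter_congr fun a _ => by simp [eq_comm]
          rw [this]
  -- Step B : rewrite second term
  have e2 : (∑ a ∈ Finset.Icc 1 HH, ∑ q ∈ (Finset.Ioc L HH).filter (fun q => q ∣ X - a), g' q)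
      = ∑ q ∈ Finset.Ioc L HH, (cnt q X : ℂ) * g' q := by
    calc ∑ a ∈ Finset.Icc 1 HH, ∑ q ∈ (Finset.Ioc L HH).filter (fun q => q ∣ X - a), g' q
        = ∑ a ∈ Finset.Icc 1 HH, ∑ q ∈ Finset.Ioc L HH, if q ∣ X - a then g' q else 0 :=
          Finset.sum_congr rfl fun a _ => Finset.sum_filter _ _
      _ = ∑ q ∈ Finset.Ioc L HH, ∑ a ∈ Finset.Icc 1 HH, if q ∣ X - a then g' q else 0 :=
          Finset.sum_comm
      _ = ∑ q ∈ Finset.Ioc L HH, (cnt q X : ℂ) * g' q := by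
          refine Finset.sum_congr rfl fun q _ => ?_
          rw [← Finset.sum_filter, Finset.sum_const, nsmul_eq_mul]
          simp only [hcnt]
          have hfe : (Finset.Icc 1 HH).filter (fun a => q ∣ X - a)
              = (Finset.Icc 1 HH).filter (fun a => a % q = X % q) := by
            refine Finset.filter_congr fun a ha => ?_
            have haH : a ≤ HH := (Finset.mem_Icc.mp ha).2
            have hax : a ≤ X := by omega
            exact ⟨fun hd => (Nat.modEq_iff_dvd' hax).mpr hd,
                   fun hm => (Nat.modEq_iff_dvd' hax).mp hm⟩
          rw [hfe]
  rw [e1, e2, Finset.sum_mul, ← Finset.sum_sub_distrib]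
  -- Step C : single-sum form
  have e3 : ∀ q ∈ Finset.Ioc L HH,
      g' q * (∑ n ∈ Finset.Ioc X (X + L), (cnt q n : ℂ) * f n)
        - (cnt q X : ℂ) * g' q * ∑ n ∈ Finset.Ioc X (X + L), f n
      = g' q * ∑ n ∈ Finset.Ioc X (X + L), ((cnt q n : ℂ) - (cnt q X : ℂ)) * f n := by
    intro q _
    rw [Finset.mul_sum, Finset.mul_sum, Finset.mul_sum, ← Finset.sum_sub_distrib]
    exact Finset.sum_congr rfl fun n _ => by ring
  rw [Finset.sum_congr rfl e3]
  -- Step D : difference of counts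
  have hcast : ∀ q, ∀ n ∈ Finset.Ioc X (X + L),
      (cnt q n : ℂ) - (cnt q X : ℂ) = (A q n : ℂ) - (Bc q n : ℂ) := by
    intro q n hn
    rw [Finset.mem_Ioc] at hn
    have hk := key_eq HH q X n hHxi hn.1.le
    have hkC := congrArg (fun t : ℕ => (t : ℂ)) hk
    push_cast at hkC
    simp only [hcnt, hA, hBc]
    linear_combination hkC
  set Mg : ℝ := Cg * ((2*X : ℕ) : ℝ) ^ (ε/3) with hMg
  set Mf : ℝ := Cf * ((2*X : ℕ) : ℝ) ^ (ε/3) with hMf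
  have h2X0 : (0:ℝ) < ((2*X : ℕ) : ℝ) := by
    have : 0 < 2*X := by omega
    exact_mod_cast this
  have hgb : ∀ q ∈ Finset.Ioc L HH, ‖g' q‖ ≤ Mg := by
    intro q hq
    obtain ⟨hq1, hq2⟩ := Finset.mem_Ioc.mp hq
    have h1 : 1 ≤ q := by omega
    refine (hCg q h1).trans ?_
    apply mul_le_mul_of_nonneg_left _ hCg0
    apply Real.rpow_le_rpow (by positivity) _ hδ.le
    exact_mod_cast (by omega : q ≤ 2*X)
  have hfb : ∀ n ∈ Finset.Ioc X (X + L), ‖f n‖ ≤ Mf := by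
    intro n hn
    obtain ⟨hn1, hn2⟩ := Finset.mem_Ioc.mp hn
    have h1 : 1 ≤ n := by omega
    refine (hCf n h1).trans ?_
    apply mul_le_mul_of_nonneg_left _ hCf0
    apply Real.rpow_le_rpow (by positivity) _ hδ.le
    exact_mod_cast (by omega : n ≤ 2*X)
  have hMg0 : 0 ≤ Mg := by rw [hMg]; positivity
  have hMf0 : 0 ≤ Mf := by rw [hMf]; positivity
  -- divisor-sum bounds
  have hcountA : ∀ n ∈ Finset.Ioc X (X + L),
      (∑ q ∈ Finset.Ioc L HH, (A q n : ℝ)) ≤ L * (Cd * ((2*X : ℕ) : ℝ) ^ (ε/3)) := by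
    intro n hn
    obtain ⟨hn1, hn2⟩ := Finset.mem_Ioc.mp hn
    have hsw : ∑ q ∈ Finset.Ioc L HH, (A q n : ℝ)
        = ∑ m ∈ Finset.Ioc (X-1) (n-1),
            (((Finset.Ioc L HH).filter (fun q => q ∣ m)).card : ℝ) := by
      simp only [hA]
      exact_mod_cast swap_count (Finset.Ioc L HH) (Finset.Ioc (X-1) (n-1))
    rw [hsw]
    have hbound : ∀ m ∈ Finset.Ioc (X-1) (n-1),
        (((Finset.Ioc L HH).filter (fun q => q ∣ m)).card : ℝ)
          ≤ Cd * ((2*X : ℕ) : ℝ) ^ (ε/3) := by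
      intro m hm
      obtain ⟨hm1, hm2⟩ := Finset.mem_Ioc.mp hm
      have hm0 : m ≠ 0 := by omega
      have h1 : (((Finset.Ioc L HH).filter (fun q => q ∣ m)).card : ℝ)
          ≤ (m.divisors.card : ℝ) := by
        have hsub : (Finset.Ioc L HH).filter (fun q => q ∣ m) ⊆ m.divisors := by
          intro q hq
          simp only [Finset.mem_filter, Finset.mem_Ioc] at hq
          exact Nat.mem_divisors.mpr ⟨hq.2, hm0⟩
        exact_mod_cast Finset.card_le_card hsub
      refine h1.trans ((hCd m hm0).trans ?_)
      apply mul_le_mul_of_nonneg_left _ (by linarith)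
      apply Real.rpow_le_rpow (by positivity) _ hδ.le
      exact_mod_cast (by omega : m ≤ 2*X)
    have hsum := Finset.sum_le_card_nsmul (Finset.Ioc (X-1) (n-1))
      (fun m => (((Finset.Ioc L HH).filter (fun q => q ∣ m)).card : ℝ))
      (Cd * ((2*X : ℕ) : ℝ) ^ (ε/3)) hbound
    rw [nsmul_eq_mul] at hsum
    refine hsum.trans ?_
    apply mul_le_mul_of_nonneg_right _ (by positivity)
    rw [Nat.card_Ioc]
    exact_mod_cast (by omega : n - 1 - (X-1) ≤ L)
  have hcountB : ∀ n ∈ Finset.Ioc X (X + L),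
      (∑ q ∈ Finset.Ioc L HH, (Bc q n : ℝ)) ≤ L * (Cd * ((2*X : ℕ) : ℝ) ^ (ε/3)) := by
    intro n hn
    obtain ⟨hn1, hn2⟩ := Finset.mem_Ioc.mp hn
    have hsw : ∑ q ∈ Finset.Ioc L HH, (Bc q n : ℝ)
        = ∑ m ∈ Finset.Ioc (X-1-HH) (n-1-HH),
            (((Finset.Ioc L HH).filter (fun q => q ∣ m)).card : ℝ) := by
      simp only [hBc]
      exact_mod_cast swap_count (Finset.Ioc L HH) (Finset.Ioc (X-1-HH) (n-1-HH))
    rw [hsw]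
    have hbound : ∀ m ∈ Finset.Ioc (X-1-HH) (n-1-HH),
        (((Finset.Ioc L HH).filter (fun q => q ∣ m)).card : ℝ)
          ≤ Cd * ((2*X : ℕ) : ℝ) ^ (ε/3) := by
      intro m hm
      obtain ⟨hm1, hm2⟩ := Finset.mem_Ioc.mp hm
      have hm0 : m ≠ 0 := by omega
      have h1 : (((Finset.Ioc L HH).filter (fun q => q ∣ m)).card : ℝ)
          ≤ (m.divisors.card : ℝ) := by
        have hsub : (Finset.Ioc L HH).filter (fun q => q ∣ m) ⊆ m.divisors := by
          intro q hq
          simp only [Finset.mem_filter, Finset.mem_Ioc] at hq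
          exact Nat.mem_divisors.mpr ⟨hq.2, hm0⟩
        exact_mod_cast Finset.card_le_card hsub
      refine h1.trans ((hCd m hm0).trans ?_)
      apply mul_le_mul_of_nonneg_left _ (by linarith)
      apply Real.rpow_le_rpow (by positivity) _ hδ.le
      exact_mod_cast (by omega : m ≤ 2*X)
    have hsum := Finset.sum_le_card_nsmul (Finset.Ioc (X-1-HH) (n-1-HH))
      (fun m => (((Finset.Ioc L HH).filter (fun q => q ∣ m)).card : ℝ))
      (Cd * ((2*X : ℕ) : ℝ) ^ (ε/3)) hbound
    rw [nsmul_eq_mul] at hsum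
    refine hsum.trans ?_
    apply mul_le_mul_of_nonneg_right _ (by positivity)
    rw [Nat.card_Ioc]
    exact_mod_cast (by omega : n - 1 - HH - (X-1-HH) ≤ L)
  -- main norm bound
  have main : ‖∑ q ∈ Finset.Ioc L HH,
        g' q * ∑ n ∈ Finset.Ioc X (X + L), ((cnt q n : ℂ) - (cnt q X : ℂ)) * f n‖
      ≤ Mg * Mf * ∑ n ∈ Finset.Ioc X (X + L), ∑ q ∈ Finset.Ioc L HH,
          ((A q n : ℝ) + (Bc q n : ℝ)) := by
    calc ‖∑ q ∈ Finset.Ioc L HH,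
            g' q * ∑ n ∈ Finset.Ioc X (X + L), ((cnt q n : ℂ) - (cnt q X : ℂ)) * f n‖
        ≤ ∑ q ∈ Finset.Ioc L HH,
            ‖g' q * ∑ n ∈ Finset.Ioc X (X + L), ((cnt q n : ℂ) - (cnt q X : ℂ)) * f n‖ :=
          norm_sum_le _ _
      _ ≤ ∑ q ∈ Finset.Ioc L HH,
            Mg * (∑ n ∈ Finset.Ioc X (X + L), ((A q n : ℝ) + (Bc q n : ℝ)) * Mf) := by
          refine Finset.sum_le_sum fun q hq => ?_
          rw [norm_mul]
          apply mul_le_mul (hgb q hq) _ (norm_nonneg _) hMg0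
          calc ‖∑ n ∈ Finset.Ioc X (X + L), ((cnt q n : ℂ) - (cnt q X : ℂ)) * f n‖
              ≤ ∑ n ∈ Finset.Ioc X (X + L), ‖((cnt q n : ℂ) - (cnt q X : ℂ)) * f n‖ :=
                norm_sum_le _ _
            _ ≤ ∑ n ∈ Finset.Ioc X (X + L), ((A q n : ℝ) + (Bc q n : ℝ)) * Mf := by
                refine Finset.sum_le_sum fun n hn => ?_
                rw [norm_mul]
                apply mul_le_mul _ (hfb n hn) (norm_nonneg _) (by positivity)
                rw [hcast q n hn]
                calc ‖(A q n : ℂ) - (Bc q n : ℂ)‖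
                    ≤ ‖(A q n : ℂ)‖ + ‖(Bc q n : ℂ)‖ := norm_sub_le _ _
                  _ = (A q n : ℝ) + (Bc q n : ℝ) := by
                      rw [Complex.norm_natCast, Complex.norm_natCast]
      _ = Mg * Mf * ∑ n ∈ Finset.Ioc X (X + L), ∑ q ∈ Finset.Ioc L HH,
            ((A q n : ℝ) + (Bc q n : ℝ)) := by
          simp only [Finset.mul_sum]
          rw [Finset.sum_comm]
          exact Finset.sum_congr rfl fun n _ => Finset.sum_congr rfl fun q _ => by ring
  -- total count bound
  have hW : ∑ n ∈ Finset.Ioc X (X + L), ∑ q ∈ Finset.Ioc L HH,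
        ((A q n : ℝ) + (Bc q n : ℝ))
      ≤ (L:ℝ) * (2 * ((L:ℝ) * (Cd * ((2*X : ℕ) : ℝ) ^ (ε/3)))) := by
    have hper : ∀ n ∈ Finset.Ioc X (X + L),
        ∑ q ∈ Finset.Ioc L HH, ((A q n : ℝ) + (Bc q n : ℝ))
          ≤ 2 * ((L:ℝ) * (Cd * ((2*X : ℕ) : ℝ) ^ (ε/3))) := by
      intro n hn
      rw [Finset.sum_add_distrib]
      have h1 := hcountA n hn
      have h2 := hcountB n hn
      linarith
    have hsum := Finset.sum_le_card_nsmul (Finset.Ioc X (X + L))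
      (fun n => ∑ q ∈ Finset.Ioc L HH, ((A q n : ℝ) + (Bc q n : ℝ)))
      (2 * ((L:ℝ) * (Cd * ((2*X : ℕ) : ℝ) ^ (ε/3)))) hper
    rw [nsmul_eq_mul] at hsum
    refine hsum.trans (le_of_eq ?_)
    rw [Nat.card_Ioc]
    congr 2
    exact_mod_cast (by omega : X + L - X = L)
  -- final assembly
  have hpow : ((2*X:ℕ):ℝ) ^ (ε/3) * ((2*X:ℕ):ℝ) ^ (ε/3) * ((2*X:ℕ):ℝ) ^ (ε/3)
      = 2 ^ ε * (X:ℝ) ^ ε := by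
    rw [← Real.rpow_add h2X0, ← Real.rpow_add h2X0]
    have h3 : ε/3 + ε/3 + ε/3 = ε := by ring
    rw [h3]
    have h4 : ((2*X:ℕ):ℝ) = 2 * (X:ℝ) := by push_cast; ring
    rw [h4, Real.mul_rpow (by norm_num) (by positivity)]
  calc ‖∑ q ∈ Finset.Ioc L HH,
        g' q * ∑ n ∈ Finset.Ioc X (X + L), ((cnt q n : ℂ) - (cnt q X : ℂ)) * f n‖
      ≤ Mg * Mf * ∑ n ∈ Finset.Ioc X (X + L), ∑ q ∈ Finset.Ioc L HH,
          ((A q n : ℝ) + (Bc q n : ℝ)) := main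
    _ ≤ Mg * Mf * ((L:ℝ) * (2 * ((L:ℝ) * (Cd * ((2*X : ℕ) : ℝ) ^ (ε/3))))) :=
        mul_le_mul_of_nonneg_left hW (mul_nonneg hMg0 hMf0)
    _ = Cg * Cf * (2 * Cd) * (((2*X:ℕ):ℝ) ^ (ε/3) * ((2*X:ℕ):ℝ) ^ (ε/3)
          * ((2*X:ℕ):ℝ) ^ (ε/3)) * (L:ℝ)^2 := by
        rw [hMg, hMf]; ring
    _ = Cg * Cf * (2 * Cd) * (2:ℝ) ^ ε * ((X:ℝ) ^ ε * (L:ℝ)^2) := by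
        rw [hpow]; ring
    _ = Cg * Cf * (2 * Cd) * (2:ℝ) ^ ε * ‖(X:ℝ) ^ ε * (L:ℝ)^2‖ := by
        rw [Real.norm_of_nonneg (by positivity)]
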